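/- arXiv:2205.07229 — 2 statements merged into one kernel-verified Lean document; each statement's English description precedes it below -/
import Mathlib

section
/- Let S be a finite state space and for each s ∈ S let B(s) be a nonempty finite set of admissible perturbed states. For a function Ṽ : S → ℝ define the adversarial Bellman operator (ℒṼ)(s) = min_{ŝ ∈ B(s)} ∑_a π(a | ŝ) ∑_{s'} p(s'|s,a) (R(s,a,s') + γ Ṽ(s')). Then ℒ is a γ-contraction on (ℝ^S, ‖·‖_∞): for all Ṽ₁, Ṽ₂, ‖ℒṼ₁ − ℒṼ₂‖_∞ ≤ γ ‖Ṽ₁ − Ṽ₂‖_∞. -/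
lemma abs_inf'_sub_inf'_le {T : Type*} {s : Finset T} (hs : s.Nonempty)
    (f g : T → ℝ) {K : ℝ} (h : ∀ t ∈ s, |f t - g t| ≤ K) :
    |s.inf' hs f - s.inf' hs g| ≤ K := by
  rw [abs_sub_le_iff]
  constructor
  · obtain ⟨t, ht, hgt⟩ := s.exists_mem_eq_inf' hs g
    have h1 : s.inf' hs f ≤ f t := Finset.inf'_le _ ht
    have := (abs_sub_le_iff.mp (h t ht)).1
    rw [hgt]; linarith
  · obtain ⟨t, ht, hft⟩ := s.exists_mem_eq_inf' hs f
    have h1 : s.inf' hs g ≤ g t := Finset.inf'_le _ ht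
    have := (abs_sub_le_iff.mp (h t ht)).2
    rw [hft]; linarith

theorem adversarial_bellman_contraction {S T A : Type*}
    [Fintype S] [Nonempty S] [Fintype A]
    (B : S → Finset T) (hB : ∀ s, (B s).Nonempty)
    (π : T → A → ℝ) (p : S → A → S → ℝ) (R : S → A → S → ℝ) (γ M : ℝ)
    (hπ0 : ∀ t a, 0 ≤ π t a) (hπ1 : ∀ t, ∑ a, π t a = 1)
    (hp0 : ∀ s a s', 0 ≤ p s a s') (hp1 : ∀ s a, ∑ s', p s a s' = 1)
    (hR : ∀ s a s', |R s a s'| ≤ M)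
    (hγ0 : 0 ≤ γ) (hγ1 : γ < 1)
    (L : (S → ℝ) → (S → ℝ))
    (hL : ∀ V s, L V s = (B s).inf' (hB s) fun t =>
      ∑ a, π t a * ∑ s', p s a s' * (R s a s' + γ * V s')) :
    ∀ V₁ V₂ : S → ℝ,
      (Finset.univ.sup' Finset.univ_nonempty fun s => |L V₁ s - L V₂ s|) ≤
        γ * Finset.univ.sup' Finset.univ_nonempty fun s => |V₁ s - V₂ s| := by
  intro V₁ V₂
  set D := Finset.univ.sup' Finset.univ_nonempty fun s => |V₁ s - V₂ s| with hD
  have hVD : ∀ s', |V₁ s' - V₂ s'| ≤ D := fun s' =>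
    Finset.le_sup' (fun s => |V₁ s - V₂ s|) (Finset.mem_univ s')
  have hD0 : 0 ≤ D := le_trans (abs_nonneg _) (hVD (Classical.arbitrary S))
  apply Finset.sup'_le
  intro s _
  rw [hL, hL]
  apply abs_inf'_sub_inf'_le
  intro t _
  have key : ∀ a : A,
      |(∑ s', p s a s' * (R s a s' + γ * V₁ s')) -
        ∑ s', p s a s' * (R s a s' + γ * V₂ s')| ≤ γ * D := by
    intro a
    rw [← Finset.sum_sub_distrib]
    calc |∑ s', (p s a s' * (R s a s' + γ * V₁ s') - p s a s' * (R s a s' + γ * V₂ s'))|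
        ≤ ∑ s', |p s a s' * (R s a s' + γ * V₁ s') - p s a s' * (R s a s' + γ * V₂ s')| :=
          Finset.abs_sum_le_sum_abs _ _
      _ ≤ ∑ s', p s a s' * (γ * D) := by
          apply Finset.sum_le_sum
          intro s' _
          have : p s a s' * (R s a s' + γ * V₁ s') - p s a s' * (R s a s' + γ * V₂ s')
              = p s a s' * (γ * (V₁ s' - V₂ s')) := by ring
          rw [this, abs_mul, abs_of_nonneg (hp0 s a s'), abs_mul, abs_of_nonneg hγ0]
          exact mul_le_mul_of_nonneg_left
            (mul_le_mul_of_nonneg_left (hVD s') hγ0) (hp0 s a s')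
      _ = γ * D := by rw [← Finset.sum_mul, hp1, one_mul]
  rw [← Finset.sum_sub_distrib]
  calc |∑ a, (π t a * ∑ s', p s a s' * (R s a s' + γ * V₁ s')
          - π t a * ∑ s', p s a s' * (R s a s' + γ * V₂ s'))|
      ≤ ∑ a, |π t a * ∑ s', p s a s' * (R s a s' + γ * V₁ s')
          - π t a * ∑ s', p s a s' * (R s a s' + γ * V₂ s')| :=
        Finset.abs_sum_le_sum_abs _ _
    _ ≤ ∑ a, π t a * (γ * D) := by
        apply Finset.sum_le_sum
        intro a _
        rw [← mul_sub, abs_mul, abs_of_nonneg (hπ0 t a)]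
        exact mul_le_mul_of_nonneg_left (key a) (hπ0 t a)
    _ = γ * D := by rw [← Finset.sum_mul, hπ1, one_mul]
end

section
/- Fix a state s and probability distributions over actions. For the one-step adversarial Bellman operators ℒ₁ with perturbation set choice using policy π(·|s, ŝ^{−j}) (agent j unattacked) and ℒ₂ using π(·|s, ŝ^j, ŝ^{−j}) minimized over ŝ^j ∈ B^j, we have for any bounded Ṽ with ‖Ṽ‖_∞ ≤ R_max/(1−γ): |(ℒ₁Ṽ)(s) − (ℒ₂Ṽ)(s)| ≤ 2(R_max + γ R_max/(1−γ)) · max_{ŝ^j ∈ B^j} D_TV(π(·|s, ŝ^{−j}), π(·|s, ŝ^j, ŝ^{−j})). -/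
theorem one_step_adversarial_gap {S T A : Type*} [Fintype S] [Fintype A]
    (s : S) (B : Finset T) (hB : B.Nonempty)
    (π₁ : A → ℝ) (π₂ : T → A → ℝ)
    (p : S → A → S → ℝ) (R : S → A → S → ℝ) (V : S → ℝ) (γ Rmax : ℝ)
    (hπ₁0 : ∀ a, 0 ≤ π₁ a) (hπ₁1 : ∑ a, π₁ a = 1)
    (hπ₂0 : ∀ t a, 0 ≤ π₂ t a) (hπ₂1 : ∀ t, ∑ a, π₂ t a = 1)
    (hp0 : ∀ s₀ a s', 0 ≤ p s₀ a s') (hp1 : ∀ s₀ a, ∑ s', p s₀ a s' = 1)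
    (hR : ∀ s₀ a s', |R s₀ a s'| ≤ Rmax)
    (hγ0 : 0 ≤ γ) (hγ1 : γ < 1)
    (hV : ∀ s', |V s'| ≤ Rmax / (1 - γ)) :
    |(∑ a, π₁ a * ∑ s', p s a s' * (R s a s' + γ * V s')) -
        B.inf' hB (fun t => ∑ a, π₂ t a * ∑ s', p s a s' * (R s a s' + γ * V s'))| ≤
      2 * (Rmax + γ * Rmax / (1 - γ)) *
        B.sup' hB (fun t => (1 / 2) * ∑ a, |π₁ a - π₂ t a|) := by
  have hg : 0 < 1 - γ := by linarith
  set C : ℝ := Rmax + γ * Rmax / (1 - γ) with hC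
  have hA : Nonempty A := by
    by_contra h
    rw [not_nonempty_iff] at h
    rw [Finset.univ_eq_empty, Finset.sum_empty] at hπ₁1
    norm_num at hπ₁1
  obtain ⟨a₀⟩ := hA
  have hRmax0 : 0 ≤ Rmax := le_trans (abs_nonneg _) (hR s a₀ s)
  have hC0 : 0 ≤ C := by positivity
  set Q : A → ℝ := fun a => ∑ s', p s a s' * (R s a s' + γ * V s') with hQ
  have hQbound : ∀ a, |Q a| ≤ C := by
    intro a
    calc |Q a| ≤ ∑ s', |p s a s' * (R s a s' + γ * V s')| :=
          Finset.abs_sum_le_sum_abs _ _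
      _ ≤ ∑ s', p s a s' * C := by
          apply Finset.sum_le_sum
          intro s' _
          rw [abs_mul, abs_of_nonneg (hp0 s a s')]
          apply mul_le_mul_of_nonneg_left _ (hp0 s a s')
          calc |R s a s' + γ * V s'| ≤ |R s a s'| + |γ * V s'| := abs_add_le _ _
            _ ≤ Rmax + γ * (Rmax / (1 - γ)) := by
                refine add_le_add (hR s a s') ?_
                rw [abs_mul, abs_of_nonneg hγ0]
                exact mul_le_mul_of_nonneg_left (hV s') hγ0
            _ = C := by rw [hC]; ring
      _ = C := by rw [← Finset.sum_mul, hp1 s a, one_mul]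
  obtain ⟨t₀, ht₀, heq⟩ := Finset.exists_mem_eq_inf' hB
    (fun t => ∑ a, π₂ t a * Q a)
  rw [heq]
  calc |(∑ a, π₁ a * Q a) - ∑ a, π₂ t₀ a * Q a|
      = |∑ a, (π₁ a - π₂ t₀ a) * Q a| := by
        rw [← Finset.sum_sub_distrib]; congr 1; apply Finset.sum_congr rfl
        intro a _; ring
    _ ≤ ∑ a, |(π₁ a - π₂ t₀ a) * Q a| := Finset.abs_sum_le_sum_abs _ _
    _ ≤ ∑ a, |π₁ a - π₂ t₀ a| * C := by
        apply Finset.sum_le_sum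
        intro a _
        rw [abs_mul]
        exact mul_le_mul_of_nonneg_left (hQbound a) (abs_nonneg _)
    _ = 2 * C * ((1 / 2) * ∑ a, |π₁ a - π₂ t₀ a|) := by
        rw [← Finset.sum_mul]; ring
    _ ≤ 2 * C * B.sup' hB (fun t => (1 / 2) * ∑ a, |π₁ a - π₂ t a|) := by
        apply mul_le_mul_of_nonneg_left _ (by linarith)
        exact Finset.le_sup' (fun t => (1 / 2) * ∑ a, |π₁ a - π₂ t a|) ht₀
end
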